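/- Let W be an m×p real matrix, 𝒢 a partition of the column indices {1,…,p}, and ℰ a partition of the row indices {1,…,m}. For v ∈ ℝ^p define ψ_𝒢(v) = Σ_{G∈𝒢}‖v_G‖₂, and for u ∈ ℝ^m define ψ_ℰ(u) = Σ_{E∈ℰ}‖u_E‖₂. Define ρ_c(W) = max_{G∈𝒢} Σ_{E∈ℰ} ρ(W_{E,G}), where W_{E,G} is the submatrix with rows E and columns G and ρ is the spectral norm. Then for every v ∈ ℝ^p, ψ_ℰ(W v) ≤ ρ_c(W) · ψ_𝒢(v). -/

import Mathlib

noncomputable def l2 {α : Type*} [Fintype α] (x : α → ℝ) : ℝ := Real.sqrt (∑ i, x i ^ 2)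

/-- Spectral norm of a real matrix. -/
noncomputable def spec {α β : Type*} [Fintype α] [Fintype β] (Z : Matrix α β ℝ) : ℝ :=
  sSup {x | ∃ v : β → ℝ, l2 v = 1 ∧ x = l2 (Z.mulVec v)}

/-- Mixed block norm `ψ` associated to a partition of the index set given by the
block-assignment map `pr`. -/
noncomputable def psiPart {α κ : Type*} [Fintype α] [Fintype κ] [DecidableEq κ]
    (pr : α → κ) (u : α → ℝ) : ℝ :=
  ∑ E : κ, l2 (fun i : {i // pr i = E} => u i.val)

/-- The block spectral norm `ρ_c(W) = max_{G} Σ_{E} ρ(W_{E,G})` with row partition `pr`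
and column partition `pc`. -/
noncomputable def rhoc {α β κ₁ κ₂ : Type*} [Fintype α] [Fintype β]
    [Fintype κ₁] [Fintype κ₂] [DecidableEq κ₁] [DecidableEq κ₂]
    (W : Matrix α β ℝ) (pr : α → κ₁) (pc : β → κ₂) : ℝ :=
  sSup {x | ∃ F : κ₂, x = ∑ E : κ₁,
    spec (W.submatrix (Subtype.val : {i // pr i = E} → α) (Subtype.val : {j // pc j = F} → β))}

lemma l2_eq_norm {α : Type*} [Fintype α] (x : α → ℝ) :
    l2 x = ‖(WithLp.equiv 2 (α → ℝ)).symm x‖ := by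
  rw [EuclideanSpace.norm_eq]
  simp [l2, sq_abs]

lemma l2_nonneg {α : Type*} [Fintype α] (x : α → ℝ) : 0 ≤ l2 x := Real.sqrt_nonneg _

lemma l2_sum_le {α ι : Type*} [Fintype α] (s : Finset ι) (f : ι → α → ℝ) :
    l2 (∑ i ∈ s, f i) ≤ ∑ i ∈ s, l2 (f i) := by
  simp only [l2_eq_norm]
  refine le_trans (le_of_eq ?_) (norm_sum_le s fun i => (WithLp.equiv 2 (α → ℝ)).symm (f i))
  congr 1
  exact map_sum (WithLp.addEquiv 2 (α → ℝ)).symm _ _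

lemma l2_smul {α : Type*} [Fintype α] (c : ℝ) (x : α → ℝ) : l2 (c • x) = |c| * l2 x := by
  rw [l2, l2]
  have : ∑ i, (c • x) i ^ 2 = c ^ 2 * ∑ i, x i ^ 2 := by
    rw [Finset.mul_sum]; congr 1; ext i; simp [mul_pow]
  rw [this, Real.sqrt_mul (sq_nonneg c), Real.sqrt_sq_eq_abs]

lemma l2_mulVec_le_frob {α β : Type*} [Fintype α] [Fintype β] (Z : Matrix α β ℝ) (u : β → ℝ) :
    l2 (Z.mulVec u) ≤ Real.sqrt (∑ i, ∑ j, Z i j ^ 2) * l2 u := by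
  rw [l2, l2, ← Real.sqrt_mul (by positivity)]
  apply Real.sqrt_le_sqrt
  rw [Finset.sum_mul]
  apply Finset.sum_le_sum
  intro i _
  exact Finset.sum_mul_sq_le_sq_mul_sq Finset.univ (fun j => Z i j) u

lemma specSet_bdd {α β : Type*} [Fintype α] [Fintype β] (Z : Matrix α β ℝ) :
    BddAbove {x | ∃ v : β → ℝ, l2 v = 1 ∧ x = l2 (Z.mulVec v)} := by
  refine ⟨Real.sqrt (∑ i, ∑ j, Z i j ^ 2), ?_⟩
  rintro x ⟨v, hv, rfl⟩
  calc l2 (Z.mulVec v) ≤ Real.sqrt (∑ i, ∑ j, Z i j ^ 2) * l2 v := l2_mulVec_le_frob Z v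
  _ = _ := by rw [hv, mul_one]

lemma l2_mulVec_le_spec {α β : Type*} [Fintype α] [Fintype β] (Z : Matrix α β ℝ) (u : β → ℝ) :
    l2 (Z.mulVec u) ≤ spec Z * l2 u := by
  rcases eq_or_lt_of_le (l2_nonneg u) with h0 | hpos
  · have hu : u = 0 := by
      funext j
      have := (Real.sqrt_eq_zero (by positivity)).mp h0.symm
      have hj : u j ^ 2 ≤ 0 := le_of_le_of_eq
        (Finset.single_le_sum (f := fun j => u j ^ 2) (fun _ _ => sq_nonneg _)
          (Finset.mem_univ j)) this
      have := le_antisymm hj (sq_nonneg _)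
      exact pow_eq_zero_iff (n := 2) (by norm_num) |>.mp this
    subst hu
    simp [Matrix.mulVec_zero, ← h0, l2]
  · set c := l2 u with hc
    have hmem : l2 (Z.mulVec (c⁻¹ • u)) ∈ {x | ∃ v : β → ℝ, l2 v = 1 ∧ x = l2 (Z.mulVec v)} := by
      refine ⟨c⁻¹ • u, ?_, rfl⟩
      rw [l2_smul, abs_of_pos (inv_pos.mpr hpos), inv_mul_cancel₀ hpos.ne']
    have hle := le_csSup (specSet_bdd Z) hmem
    have : l2 (Z.mulVec u) = c * l2 (Z.mulVec (c⁻¹ • u)) := by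
      rw [Matrix.mulVec_smul, l2_smul, abs_of_pos (inv_pos.mpr hpos)]
      field_simp
    rw [this, mul_comm]
    exact mul_le_mul_of_nonneg_right hle (le_of_lt hpos)

/-- Generalized Lemma 3 of Eldar–Kuppinger–Bölcskei: `ψ_ℰ(W v) ≤ ρ_c(W) · ψ_𝒢(v)`. -/
theorem psiPart_mulVec_le {α β κ₁ κ₂ : Type*} [Fintype α] [Fintype β]
    [Fintype κ₁] [Fintype κ₂] [DecidableEq κ₁] [DecidableEq κ₂]
    (W : Matrix α β ℝ) (pr : α → κ₁) (pc : β → κ₂) (v : β → ℝ) :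
    psiPart pr (W.mulVec v) ≤ rhoc W pr pc * psiPart pc v := by
  classical
  set vF : κ₂ → β → ℝ := fun F j => if pc j = F then v j else 0 with hvF
  set sm : (E : κ₁) → (F : κ₂) → Matrix {i // pr i = E} {j // pc j = F} ℝ := fun E F =>
    W.submatrix (Subtype.val : {i // pr i = E} → α) (Subtype.val : {j // pc j = F} → β)
    with hsm
  have hv : v = ∑ F : κ₂, vF F := by
    funext j
    simp [hvF, Finset.sum_apply, Finset.sum_ite_eq]
  have hsplit : W.mulVec v = ∑ F : κ₂, W.mulVec (vF F) := by
    rw [hv]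
    funext i
    simp only [Matrix.mulVec, dotProduct, Finset.sum_apply, Finset.mul_sum]
    exact Finset.sum_comm
  have hblock : ∀ (E : κ₁) (F : κ₂),
      (fun i : {i // pr i = E} => (W.mulVec (vF F)) i.val) =
      (sm E F).mulVec (fun j : {j // pc j = F} => v j.val) := by
    intro E F
    funext i
    simp only [Matrix.mulVec, dotProduct, Matrix.submatrix_apply, hvF, hsm]
    rw [← Finset.sum_subtype (Finset.univ.filter (fun j => pc j = F))
      (by simp) (fun j => W i.val j * v j)]
    rw [Finset.sum_filter]
    congr 1; funext j
    by_cases h : pc j = F <;> simp [h]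
  have hbdd : BddAbove {x | ∃ F : κ₂, x = ∑ E : κ₁, spec (sm E F)} := by
    have heq : {x | ∃ F : κ₂, x = ∑ E : κ₁, spec (sm E F)} =
        Set.range (fun F : κ₂ => ∑ E : κ₁, spec (sm E F)) := by
      ext x; simp [Set.range, eq_comm]
    rw [heq]
    exact (Set.finite_range _).bddAbove
  have hrhoc : ∀ F : κ₂, (∑ E : κ₁, spec (sm E F)) ≤ rhoc W pr pc := fun F =>
    le_csSup hbdd ⟨F, rfl⟩
  calc psiPart pr (W.mulVec v)
      = ∑ E : κ₁, l2 (fun i : {i // pr i = E} => (∑ F : κ₂, W.mulVec (vF F)) i.val) := by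
        rw [psiPart, hsplit]
    _ ≤ ∑ E : κ₁, ∑ F : κ₂, l2 (fun i : {i // pr i = E} => (W.mulVec (vF F)) i.val) := by
        apply Finset.sum_le_sum
        intro E _
        have : (fun i : {i // pr i = E} => (∑ F : κ₂, W.mulVec (vF F)) i.val) =
            ∑ F : κ₂, (fun i : {i // pr i = E} => (W.mulVec (vF F)) i.val) := by
          funext i; simp [Finset.sum_apply]
        rw [this]
        exact l2_sum_le _ _
    _ = ∑ F : κ₂, ∑ E : κ₁, l2 (fun i : {i // pr i = E} => (W.mulVec (vF F)) i.val) :=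
        Finset.sum_comm
    _ ≤ ∑ F : κ₂, ∑ E : κ₁, spec (sm E F) * l2 (fun j : {j // pc j = F} => v j.val) := by
        apply Finset.sum_le_sum
        intro F _
        apply Finset.sum_le_sum
        intro E _
        rw [hblock E F]
        exact l2_mulVec_le_spec _ _
    _ = ∑ F : κ₂, (∑ E : κ₁, spec (sm E F)) * l2 (fun j : {j // pc j = F} => v j.val) := by
        simp [Finset.sum_mul]
    _ ≤ ∑ F : κ₂, rhoc W pr pc * l2 (fun j : {j // pc j = F} => v j.val) := by
        apply Finset.sum_le_sum
        intro F _
        exact mul_le_mul_of_nonneg_right (hrhoc F) (l2_nonneg _)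
    _ = rhoc W pr pc * psiPart pc v := by
        rw [psiPart, Finset.mul_sum]
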